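/- Discrete Gronwall-type decay for concave recursions: let h : (0,1] → (0,1) be increasing with x ↦ x(1−h(x)) increasing, and suppose h(x) = c·x^{α−1} for some c > 0 and α > 1. Let (u_k) satisfy u_0 = 1 and u_{k+1} ≤ u_k(1 − ½h(u_k)) for all k < K. Then there is a constant c'' > 0 (depending only on c and α) such that h(u_k) ≤ c''/k for all 1 ≤ k ≤ K. -/

import Mathlib

open Real

private lemma bernoulli_neg {t β : ℝ} (ht0 : 0 ≤ t) (ht1 : t < 1) (hβ : 0 < β) :
    1 + β * t ≤ (1 - t) ^ (-β) := by
  have h1t : 0 < 1 - t := by linarith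
  rcases le_or_gt β 1 with hβ1 | hβ1
  · -- (1-t)^β ≤ 1 - βt, then multiply
    have hb : (1 - t) ^ β ≤ 1 - β * t := by
      have h2 := rpow_one_add_le_one_add_mul_self (s := -t) (by linarith) hβ.le hβ1
      rw [show (1:ℝ) + -t = 1 - t by ring] at h2
      linarith
    have hβt : 0 < 1 - β * t := by nlinarith
    have hpos : (0:ℝ) < (1 - t) ^ β := Real.rpow_pos_of_pos h1t β
    rw [Real.rpow_neg h1t.le, le_inv_comm₀ (by positivity) hpos]
    calc (1 - t) ^ β ≤ 1 - β * t := hb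
      _ ≤ (1 + β * t)⁻¹ := by
          rw [inv_eq_one_div, le_div_iff₀ (by nlinarith)]
          nlinarith [sq_nonneg (β * t)]
  · -- use Bernoulli with s = t/(1-t)
    have hs : (0:ℝ) ≤ t / (1 - t) := by positivity
    have key := one_add_mul_self_le_rpow_one_add (s := t / (1 - t)) (by linarith) hβ1.le
    have heq : 1 + t / (1 - t) = (1 - t)⁻¹ := by field_simp; ring
    have h2 : (1 + t / (1 - t)) ^ β = (1 - t) ^ (-β) := by
      rw [heq, ← Real.rpow_neg_one (1 - t), ← Real.rpow_mul h1t.le]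
      norm_num
    calc 1 + β * t ≤ 1 + β * (t / (1 - t)) := by
          have : t ≤ t / (1 - t) := by
            rw [le_div_iff₀ h1t]; nlinarith
          nlinarith
      _ ≤ (1 + t / (1 - t)) ^ β := key
      _ = (1 - t) ^ (-β) := h2

theorem discrete_gronwall_decay (c α : ℝ) (hc : 0 < c) (hα : 1 < α) :
    ∃ c'' : ℝ, 0 < c'' ∧
      ∀ (h : ℝ → ℝ), (∀ x, h x = c * x ^ (α - 1)) →
      (∀ x ∈ Set.Ioc (0:ℝ) 1, h x ∈ Set.Ioo (0:ℝ) 1) →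
      StrictMonoOn h (Set.Ioc (0:ℝ) 1) →
      StrictMonoOn (fun x => x * (1 - h x)) (Set.Ioc (0:ℝ) 1) →
      ∀ (K : ℕ) (u : ℕ → ℝ), u 0 = 1 →
      (∀ k, k ≤ K → u k ∈ Set.Ioc (0:ℝ) 1) →
      (∀ k, k < K → u (k + 1) ≤ u k * (1 - h (u k) / 2)) →
      ∀ k, 1 ≤ k → k ≤ K → h (u k) ≤ c'' / k := by
  set β := α - 1 with hβdef
  have hβ : 0 < β := by simp [hβdef]; linarith
  refine ⟨2 / β, by positivity, ?_⟩
  intro h hform hio hsm hsm2 K u hu0 hbound hrec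
  -- v k = (u k)^(-β)
  set v : ℕ → ℝ := fun k => (u k) ^ (-β) with hv
  have hupos : ∀ k, k ≤ K → 0 < u k := fun k hk => (hbound k hk).1
  have hvpos : ∀ k, k ≤ K → 0 < v k := fun k hk => Real.rpow_pos_of_pos (hupos k hk) _
  have hhv : ∀ k, k ≤ K → h (u k) = c / v k := by
    intro k hk
    have hveq : v k = (u k ^ β)⁻¹ := Real.rpow_neg (hupos k hk).le β
    have hp : (0:ℝ) < u k ^ β := Real.rpow_pos_of_pos (hupos k hk) β
    rw [hform, hveq]
    field_simp
  -- step inequality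
  have hstep : ∀ k, k < K → v k + β * c / 2 ≤ v (k + 1) := by
    intro k hk
    have hkK : k ≤ K := hk.le
    have hup := hupos k hkK
    have hh := hio (u k) (hbound k hkK)
    set t := h (u k) / 2 with htdef
    have ht0 : 0 ≤ t := by simp [htdef]; linarith [hh.1]
    have ht1 : t < 1 := by simp [htdef]; linarith [hh.2]
    have h1t : 0 < 1 - t := by linarith
    have hle : u (k + 1) ≤ u k * (1 - t) := hrec k hk
    have hmono := Real.rpow_le_rpow_of_nonpos (hupos (k+1) hk) hle (neg_nonpos.mpr hβ.le)
    have hmul : (u k * (1 - t)) ^ (-β) = v k * (1 - t) ^ (-β) :=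
      Real.mul_rpow hup.le h1t.le
    have hbern := bernoulli_neg ht0 ht1 hβ
    have hvk := hvpos k hkK
    have hvt : v k * (1 + β * t) ≤ v k * (1 - t) ^ (-β) :=
      mul_le_mul_of_nonneg_left hbern hvk.le
    have hvut : v k * (β * t) = β * c / 2 := by
      have : v k * h (u k) = c := by
        rw [hhv k hkK]; field_simp
      calc v k * (β * t) = β / 2 * (v k * h (u k)) := by rw [htdef]; ring
        _ = β * c / 2 := by rw [this]; ring
    calc v k + β * c / 2 = v k * (1 + β * t) := by rw [← hvut]; ring
      _ ≤ v k * (1 - t) ^ (-β) := hvt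
      _ = (u k * (1 - t)) ^ (-β) := hmul.symm
      _ ≤ v (k + 1) := hmono
  -- linear growth
  have hgrow : ∀ k, k ≤ K → (k : ℝ) * (β * c / 2) ≤ v k := by
    intro k
    induction k with
    | zero => intro _; simp [hv, hu0]
    | succ n ih =>
      intro hk
      have hn : n ≤ K := Nat.le_of_succ_le hk
      have h1 := hstep n (Nat.lt_of_succ_le hk)
      have h2 := ih hn
      push_cast
      nlinarith
  intro k hk1 hkK
  have hg := hgrow k hkK
  have hk1' : (1:ℝ) ≤ (k:ℝ) := by exact_mod_cast hk1
  have hkpos : (0:ℝ) < k := by linarith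
  have hvk := hvpos k hkK
  rw [hhv k hkK, div_le_div_iff₀ hvk hkpos]
  have h2β : (0:ℝ) < 2 / β := by positivity
  have hmul := mul_le_mul_of_nonneg_left hg h2β.le
  have heq : 2 / β * ((k:ℝ) * (β * c / 2)) = c * k := by field_simp
  linarith
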